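/- The collection C(W) of minimal nonempty supports of elements of a nonzero finite-dimensional subspace W ⊆ K^E satisfies the circuit elimination axiom for infinite matroids: whenever X ⊆ C ∈ C(W) and {C_x : x ∈ X} ⊆ C(W) is a family with x ∈ C_y iff x = y for all x,y ∈ X, then for every z ∈ C \ (⋃_x C_x) there is C' ∈ C(W) with z ∈ C' ⊆ (C ∪ ⋃_x C_x) \ X. -/

import Mathlib

/-- `IsCircuit W C` : C is a minimal nonempty support of an element of W. -/
def IsCircuit {K E : Type*} [Field K] (W : Submodule K (E → K)) (C : Set E) : Prop :=
  ∃ w ∈ W, w ≠ 0 ∧ Function.support w = C ∧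
    ∀ w' ∈ W, w' ≠ 0 → Function.support w' ⊆ C → Function.support w' = C

/-- Functions vanishing outside `S`, as a submodule of `E → K`. -/
def vanishOutside (K : Type*) [Field K] {E : Type*} (S : Set E) :
    Submodule K (E → K) where
  carrier := {u | ∀ e ∉ S, u e = 0}
  add_mem' := by
    intro a b ha hb e he
    simp [Pi.add_apply, ha e he, hb e he]
  zero_mem' := by intro e _; rfl
  smul_mem' := by
    intro c u hu e he
    simp [Pi.smul_apply, hu e he]

lemma mem_vanishOutside {K : Type*} [Field K] {E : Type*} {S : Set E} {u : E → K} :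
    u ∈ vanishOutside K S ↔ ∀ e ∉ S, u e = 0 := Iff.rfl

/-- Lemma A: any point of the support of a nonzero element of a finite-dimensional
subspace lies in a circuit contained in that support. -/
lemma exists_circuit_subset_support {K E : Type*} [Field K] (W : Submodule K (E → K))
    [FiniteDimensional K W] :
    ∀ n : ℕ, ∀ v ∈ W, ∀ z : E, v z ≠ 0 →
      Module.finrank K ↥(W ⊓ vanishOutside K (Function.support v)) ≤ n →
      ∃ C', IsCircuit W C' ∧ z ∈ C' ∧ C' ⊆ Function.support v := by
  intro n
  induction n with
  | zero =>
    intro v hv z hz hrk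
    exfalso
    haveI : FiniteDimensional K ↥(W ⊓ vanishOutside K (Function.support v)) :=
      Submodule.finiteDimensional_of_le inf_le_left
    have hle : Module.finrank K ↥(W ⊓ vanishOutside K (Function.support v)) = 0 :=
      Nat.le_zero.mp hrk
    have hbot : (W ⊓ vanishOutside K (Function.support v) : Submodule K (E → K)) = ⊥ :=
      Submodule.finrank_eq_zero.mp hle
    have hvmem : v ∈ (W ⊓ vanishOutside K (Function.support v) : Submodule K (E → K)) :=
      Submodule.mem_inf.mpr ⟨hv, fun e he => by
        simpa [Function.mem_support, not_not] using he⟩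
    rw [hbot, Submodule.mem_bot] at hvmem
    exact hz (by simp [hvmem])
  | succ n ih =>
    intro v hv z hz hrk
    have hvmem : v ∈ (W ⊓ vanishOutside K (Function.support v) : Submodule K (E → K)) :=
      Submodule.mem_inf.mpr ⟨hv, fun e he => by
        simpa [Function.mem_support, not_not] using he⟩
    by_cases hmin : ∀ w' ∈ W, w' ≠ 0 → Function.support w' ⊆ Function.support v →
        Function.support w' = Function.support v
    · refine ⟨Function.support v, ⟨v, hv, ?_, rfl, hmin⟩, hz, subset_rfl⟩
      intro h0; exact hz (by simp [h0])
    · push_neg at hmin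
      obtain ⟨u, huW, hu0, husub, huneq⟩ := hmin
      have key : ∃ v' ∈ W, v' z ≠ 0 ∧ Function.support v' ⊆ Function.support v ∧
          (W ⊓ vanishOutside K (Function.support v') : Submodule K (E → K)) <
            (W ⊓ vanishOutside K (Function.support v) : Submodule K (E → K)) := by
        by_cases hzu : u z ≠ 0
        · -- use u itself
          obtain ⟨e, hev, heu⟩ : ∃ e, v e ≠ 0 ∧ u e = 0 := by
            by_contra h
            push_neg at h
            exact huneq (subset_antisymm husub fun e he => h e he)
          refine ⟨u, huW, hzu, husub, lt_of_le_of_ne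
            (inf_le_inf_left _ fun f hf e' he' => hf e' fun h => he' (husub h)) ?_⟩
          intro heq
          rw [← heq] at hvmem
          have := (Submodule.mem_inf.mp hvmem).2 e (by simp [heu])
          exact hev this
        · push_neg at hzu
          obtain ⟨e, he⟩ : ∃ e, u e ≠ 0 := by
            by_contra h; push_neg at h
            exact hu0 (funext fun e => by simp [h e])
          have hev : v e ≠ 0 := husub (Function.mem_support.mpr he)
          set v' : E → K := v - (v e / u e) • u with hv'def
          have hv'W : v' ∈ W := W.sub_mem hv (W.smul_mem _ huW)
          have hv'z : v' z ≠ 0 := by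
            simp [hv'def, Pi.sub_apply, Pi.smul_apply, hzu, hz]
          have hv'sub : Function.support v' ⊆ Function.support v := by
            intro e' he'
            rw [Function.mem_support] at he' ⊢
            intro hve'
            apply he'
            have hue' : u e' = 0 := by
              by_contra h
              exact husub (Function.mem_support.mpr h) hve'
            simp only [hv'def, Pi.sub_apply, Pi.smul_apply, smul_eq_mul, hve', hue']
            ring
          have hv'e : v' e = 0 := by
            simp only [hv'def, Pi.sub_apply, Pi.smul_apply, smul_eq_mul]
            field_simp
            ring
          refine ⟨v', hv'W, hv'z, hv'sub, lt_of_le_of_ne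
            (inf_le_inf_left _ fun f hf e' he' => hf e' fun h => he' (hv'sub h)) ?_⟩
          intro heq
          rw [← heq] at hvmem
          have := (Submodule.mem_inf.mp hvmem).2 e (by simp [Function.mem_support, hv'e])
          exact hev this
      obtain ⟨v', hv'W, hv'z, hv'sub, hlt⟩ := key
      haveI : FiniteDimensional K ↥(W ⊓ vanishOutside K (Function.support v)) :=
        Submodule.finiteDimensional_of_le inf_le_left
      have hrk' : Module.finrank K ↥(W ⊓ vanishOutside K (Function.support v')) ≤ n := by
        have := Submodule.finrank_lt_finrank_of_lt (K := K) (V := E → K) hlt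
        omega
      obtain ⟨C', hC', hzC', hsub⟩ := ih v' hv'W z hv'z hrk'
      exact ⟨C', hC', hzC', hsub.trans hv'sub⟩

/-- circuit elimination axiom (for infinite matroids) for the
collection C(W) of minimal nonempty supports of a nonzero finite-dimensional
subspace W ⊆ K^E. -/
theorem stmt6 {K E : Type*} [Field K] (W : Submodule K (E → K))
    (hW : W ≠ ⊥) (hfin : FiniteDimensional K W)
    (C : Set E) (hC : IsCircuit W C) (X : Set E) (hX : X ⊆ C)
    (Cf : X → Set E) (hCf : ∀ x : X, IsCircuit W (Cf x))
    (hmem : ∀ x y : X, (x : E) ∈ Cf y ↔ x = y)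
    (z : E) (hz : z ∈ C \ ⋃ x : X, Cf x) :
    ∃ C', IsCircuit W C' ∧ z ∈ C' ∧ C' ⊆ (C ∪ ⋃ x : X, Cf x) \ X := by
  classical
  obtain ⟨w, hwW, hw0, hwsupp, hwmin⟩ := hC
  -- choose witnesses for each Cf x
  choose wf hwfW hwf0 hwfsupp hwfmin using hCf
  -- basic facts
  have hwfx : ∀ x : X, wf x (x : E) ≠ 0 := by
    intro x
    have : (x : E) ∈ Cf x := (hmem x x).mpr rfl
    rw [← hwfsupp x] at this
    exact this
  have hwfxy : ∀ x y : X, x ≠ y → wf y (x : E) = 0 := by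
    intro x y hxy
    by_contra h
    have : (x : E) ∈ Cf y := by rw [← hwfsupp y]; exact h
    exact hxy ((hmem x y).mp this)
  -- X is finite since the wf are linearly independent
  have hli : LinearIndependent K (fun x : X => (⟨wf x, hwfW x⟩ : W)) := by
    rw [linearIndependent_iff']
    intro s g hsum x hxs
    have hfun : (∑ i ∈ s, g i • wf i) = 0 := by
      have := congrArg (Subtype.val) hsum
      simpa using this
    have := congrFun hfun (x : E)
    simp only [Finset.sum_apply, Pi.smul_apply, smul_eq_mul, Pi.zero_apply] at this
    rw [Finset.sum_eq_single x] at this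
    · rcases mul_eq_zero.mp this with h | h
      · exact h
      · exact absurd h (hwfx x)
    · intro y _ hyx
      rw [hwfxy x y (Ne.symm hyx)]
      ring
    · intro h; exact absurd hxs h
  haveI : Finite X := hli.finite
  haveI : Fintype X := Fintype.ofFinite X
  -- the eliminated vector
  set v : E → K := w - ∑ x : X, (w (x : E) / wf x (x : E)) • wf x with hvdef
  have hvW : v ∈ W := W.sub_mem hwW (Submodule.sum_mem W fun x _ => W.smul_mem _ (hwfW x))
  have hvapp : ∀ e : E, v e = w e - ∑ x : X, (w (x : E) / wf x (x : E)) * wf x e := by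
    intro e
    simp [hvdef, Finset.sum_apply]
  -- v vanishes on X
  have hvX : ∀ x : X, v (x : E) = 0 := by
    intro x
    rw [hvapp]
    rw [Finset.sum_eq_single x]
    · rw [div_mul_cancel₀ _ (hwfx x), sub_self]
    · intro y _ hyx
      rw [hwfxy x y (Ne.symm hyx)]
      ring
    · intro h; exact absurd (Finset.mem_univ x) h
  -- v z ≠ 0
  obtain ⟨hzC, hzU⟩ := hz
  have hvz : v z ≠ 0 := by
    rw [hvapp]
    have hsum0 : ∀ x : X, wf x z = 0 := by
      intro x
      by_contra h
      apply hzU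
      exact Set.mem_iUnion.mpr ⟨x, by rw [← hwfsupp x]; exact h⟩
    rw [Finset.sum_eq_zero (fun x _ => by rw [hsum0 x]; ring)]
    rw [← hwsupp] at hzC
    simpa using hzC
  -- support of v is inside (C ∪ ⋃) \ X
  have hvsupp : Function.support v ⊆ (C ∪ ⋃ x : X, Cf x) \ X := by
    intro e he
    rw [Function.mem_support] at he
    constructor
    · by_contra h1
      apply he
      rw [hvapp]
      have hwe : w e = 0 := by
        by_contra hwe
        exact h1 (Or.inl (hwsupp ▸ (Function.mem_support.mpr hwe)))
      have hwfe : ∀ x : X, wf x e = 0 := by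
        intro x
        by_contra hwfe
        exact h1 (Or.inr (Set.mem_iUnion.mpr ⟨x, (hwfsupp x) ▸ Function.mem_support.mpr hwfe⟩))
      rw [hwe, Finset.sum_eq_zero (fun x _ => by rw [hwfe x]; ring)]
      ring
    · intro heX
      exact he (hvX ⟨e, heX⟩)
  -- apply Lemma A
  obtain ⟨C', hC', hzC', hsub⟩ := exists_circuit_subset_support W
    (Module.finrank K ↥(W ⊓ vanishOutside K (Function.support v))) v hvW z hvz le_rfl
  exact ⟨C', hC', hzC', hsub.trans hvsupp⟩
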